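/- Let K ⊆ ℝⁿ be a nonempty compact set, let f₁,…,f_m, R₁, R₂ be real polynomials with R₁(x) > 0 and R₂(x) > 0 for all x ∈ K, and let b ∈ ℝᵐ. Suppose there exist Borel measures μ₁, μ₂ supported in K with ∫ fᵢ dμ₁ − ∫ fᵢ dμ₂ = bᵢ for i = 1,…,m. Then the infimum of ∫ R₁ dμ₁ + ∫ R₂ dμ₂ over all pairs (μ₁, μ₂) of Borel measures supported in K satisfying ∫ fᵢ dμ₁ − ∫ fᵢ dμ₂ = bᵢ (i = 1,…,m) equals the supremum of b₁λ₁ + ⋯ + b_mλ_m over all λ ∈ ℝᵐ such that both R₁(x) − Σᵢ λᵢ fᵢ(x) ≥ 0 and R₂(x) + Σᵢ λᵢ fᵢ(x) ≥ 0 for every x ∈ K. -/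

import Mathlib

open MeasureTheory ENNReal

theorem aux_isCompact_convexHull {E : Type*} [NormedAddCommGroup E] [NormedSpace ℝ E]
    [FiniteDimensional ℝ E] {s : Set E} (hs : IsCompact s) : IsCompact (convexHull ℝ s) := by
  rcases s.eq_empty_or_nonempty with rfl | ⟨s₀, hs₀⟩
  · simp
  set N := Module.finrank ℝ E + 1 with hN
  set g : (Fin N → ℝ) × (Fin N → E) → E := fun p => ∑ i, p.1 i • p.2 i with hg
  have hgc : Continuous g := by
    apply continuous_finset_sum
    intro i _
    exact ((continuous_apply i).comp continuous_fst).smul ((continuous_apply i).comp continuous_snd)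
  have hDc : IsCompact ((stdSimplex ℝ (Fin N)) ×ˢ (Set.pi Set.univ (fun _ : Fin N => s))) :=
    (isCompact_stdSimplex ℝ (Fin N)).prod (isCompact_univ_pi fun _ => hs)
  have himg : convexHull ℝ s = g '' ((stdSimplex ℝ (Fin N)) ×ˢ (Set.pi Set.univ (fun _ : Fin N => s))) := by
    apply Set.Subset.antisymm
    · intro x hx
      obtain ⟨ι, hfin, z, w, hzs, hai, hw0, hw1, hxw⟩ :=
        eq_pos_convex_span_of_mem_convexHull hx
      have hcard : Fintype.card ι ≤ N := by
        have h1 := hai.card_le_finrank_succ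
        have h2 : Module.finrank ℝ (vectorSpan ℝ (Set.range z)) ≤ Module.finrank ℝ E :=
          Submodule.finrank_le _
        omega
      have e : ι ↪ Fin N :=
        ((Fintype.equivFin ι).toEmbedding.trans (Fin.castLEEmb hcard))
      classical
      set w' : Fin N → ℝ := fun j => if h : ∃ i, e i = j then w h.choose else 0 with hw'
      set z' : Fin N → E := fun j => if h : ∃ i, e i = j then z h.choose else s₀ with hz'
      have hwe : ∀ i, w' (e i) = w i := by
        intro i
        have h : ∃ i', e i' = e i := ⟨i, rfl⟩
        simp only [hw', dif_pos h]
        rw [e.injective h.choose_spec]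
      have hze : ∀ i, z' (e i) = z i := by
        intro i
        have h : ∃ i', e i' = e i := ⟨i, rfl⟩
        simp only [hz', dif_pos h]
        rw [e.injective h.choose_spec]
      refine ⟨(w', z'), ⟨⟨?_, ?_⟩, ?_⟩, ?_⟩
      · intro j
        by_cases h : ∃ i, e i = j
        · simp only [hw', dif_pos h]; exact (hw0 _).le
        · simp [hw', dif_neg h]
      · rw [← Finset.sum_subset (Finset.subset_univ (Finset.univ.image e))]
        · rw [Finset.sum_image (fun a _ b _ h => e.injective h)]
          simpa [hwe] using hw1
        · intro j _ hj
          have h : ¬ ∃ i, e i = j := by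
            rintro ⟨i, rfl⟩
            exact hj (Finset.mem_image_of_mem e (Finset.mem_univ i))
          simp [hw', dif_neg h]
      · intro j _
        by_cases h : ∃ i, e i = j
        · simp only [hz', dif_pos h]
          exact hzs ⟨_, rfl⟩
        · simp only [hz', dif_neg h]; exact hs₀
      · simp only [hg]
        rw [← Finset.sum_subset (Finset.subset_univ (Finset.univ.image e))]
        · rw [Finset.sum_image (fun a _ b _ h => e.injective h)]
          simp only [hwe, hze]
          exact hxw
        · intro j _ hj
          have h : ¬ ∃ i, e i = j := by
            rintro ⟨i, rfl⟩
            exact hj (Finset.mem_image_of_mem e (Finset.mem_univ i))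
          simp [hw', dif_neg h]
    · rintro x ⟨⟨w, z⟩, ⟨⟨hw0, hw1⟩, hzs⟩, rfl⟩
      exact (convex_convexHull ℝ s).sum_mem (fun i _ => hw0 i) hw1
        (fun i _ => subset_convexHull ℝ s (hzs i (Set.mem_univ i)))
  rw [himg]
  exact hDc.image hgc

theorem aux_cone_closed {E : Type*} [NormedAddCommGroup E] [NormedSpace ℝ E] {s : Set E}
    (hs : IsCompact s) {δ : ℝ} (hδ : 0 < δ) (hd : ∀ c ∈ s, δ ≤ ‖c‖) :
    IsClosed {y : E | ∃ t : ℝ, 0 ≤ t ∧ ∃ c ∈ s, y = t • c} := by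
  apply IsSeqClosed.isClosed
  intro u y hu huy
  choose t ht c hc hu using hu
  obtain ⟨M, hM⟩ : ∃ M, ∀ k, ‖u k‖ ≤ M := by
    obtain ⟨M, hM⟩ := (huy.norm).bddAbove_range
    exact ⟨M, fun k => hM ⟨k, rfl⟩⟩
  have htM : ∀ k, t k ≤ M / δ := by
    intro k
    rw [le_div_iff₀ hδ]
    calc t k * δ ≤ t k * ‖c k‖ := by
          exact mul_le_mul_of_nonneg_left (hd _ (hc k)) (ht k)
      _ = ‖u k‖ := by rw [hu k, norm_smul, Real.norm_eq_abs, abs_of_nonneg (ht k)]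
      _ ≤ M := hM k
  obtain ⟨cl, hcl, φ, hφ, hcφ⟩ := hs.tendsto_subseq hc
  obtain ⟨tl, htl, ψ, hψ, htψ⟩ := (isCompact_Icc (a := (0:ℝ)) (b := M / δ)).tendsto_subseq
    (x := fun k => t (φ k)) (fun k => ⟨ht _, htM _⟩)
  have h1 : Filter.Tendsto (fun k => u (φ (ψ k))) Filter.atTop (nhds (tl • cl)) := by
    have := htψ.smul (hcφ.comp hψ.tendsto_atTop)
    simpa only [Function.comp, hu] using this
  have h2 : Filter.Tendsto (fun k => u (φ (ψ k))) Filter.atTop (nhds y) :=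
    huy.comp ((hφ.comp hψ).tendsto_atTop)
  exact ⟨tl, htl.1, cl, hcl, (tendsto_nhds_unique h2 h1)⟩

theorem aux_integrable {α E : Type*} [MeasurableSpace α] [TopologicalSpace α]
    [OpensMeasurableSpace α] [NormedAddCommGroup E] [SecondCountableTopology E] {K : Set α} (hK : IsCompact K)
    {g : α → E} (hg : Continuous g) (μ : Measure α) [IsFiniteMeasure μ] (hμ : μ Kᶜ = 0) :
    Integrable g μ := by
  obtain ⟨M, hM⟩ := hK.exists_bound_of_continuousOn hg.continuousOn
  have hae : ∀ᵐ x ∂μ, x ∈ K := by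
    rw [MeasureTheory.ae_iff]
    simpa [Set.compl_def] using hμ
  exact (integrable_const M).mono' hg.aestronglyMeasurable (hae.mono fun x hx => hM x hx)

theorem aux_integral_mem {α E : Type*} [MeasurableSpace α] [TopologicalSpace α]
    [OpensMeasurableSpace α] [NormedAddCommGroup E] [SecondCountableTopology E] [NormedSpace ℝ E] [CompleteSpace E]
    {K : Set α} (hK : IsCompact K) {cs : Set E} (hconv : Convex ℝ cs) (hcl : IsClosed cs)
    (hne : cs.Nonempty) {g : α → E} (hg : Continuous g) (μ : Measure α) [IsFiniteMeasure μ]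
    (hμ : μ Kᶜ = 0) (hmem : ∀ x ∈ K, g x ∈ cs) :
    ∃ t : ℝ, 0 ≤ t ∧ ∃ c ∈ cs, ∫ x, g x ∂μ = t • c := by
  rcases eq_or_ne μ 0 with rfl | hμ0
  · exact ⟨0, le_refl 0, hne.choose, hne.choose_spec, by simp⟩
  · have := NeZero.mk hμ0
    have hae : ∀ᵐ x ∂μ, g x ∈ cs := by
      have h1 : ∀ᵐ x ∂μ, x ∈ K := by
        rw [MeasureTheory.ae_iff]
        simpa [Set.compl_def] using hμ
      exact h1.mono fun x hx => hmem x hx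
    have havg : (⨍ x, g x ∂μ) ∈ cs :=
      hconv.average_mem hcl hae (aux_integrable hK hg μ hμ)
    exact ⟨(μ Set.univ).toReal, ENNReal.toReal_nonneg, _, havg,
      (measure_smul_average μ g).symm⟩

theorem aux_realize {n : ℕ} {E : Type*} [NormedAddCommGroup E] [NormedSpace ℝ E]
    [SecondCountableTopology E] [CompleteSpace E]
    {K : Set (Fin n → ℝ)} (hKne : K.Nonempty) (hK : IsCompact K)
    {v w : (Fin n → ℝ) → E} (hv : Continuous v) (hw : Continuous w)
    {c : E} (hc : c ∈ convexHull ℝ (v '' K ∪ w '' K)) {t : ℝ} (ht : 0 ≤ t) :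
    ∃ μ₁ μ₂ : Measure (Fin n → ℝ), IsFiniteMeasure μ₁ ∧ IsFiniteMeasure μ₂ ∧
      μ₁ Kᶜ = 0 ∧ μ₂ Kᶜ = 0 ∧ (∫ x, v x ∂μ₁) + (∫ x, w x ∂μ₂) = t • c := by
  classical
  rw [convexHull_eq] at hc
  obtain ⟨ι, tt, wt, z, hw0, hw1, hzS, hcm⟩ := hc
  have hcm' : ∑ i ∈ tt, wt i • z i = c := by
    rw [← Finset.centerMass_eq_of_sum_1 _ _ hw1]; exact hcm
  set P' : ι → Prop := fun i => ∃ x, x ∈ K ∧ (z i = v x ∨ z i = w x) with hP'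
  set xc : ι → (Fin n → ℝ) := fun i => if h : P' i then h.choose else hKne.choose with hxc
  have hxcK : ∀ i, xc i ∈ K := by
    intro i
    by_cases h : P' i
    · simp only [hxc, dif_pos h]; exact h.choose_spec.1
    · simp only [hxc, dif_neg h]; exact hKne.choose_spec
  have hzi : ∀ i ∈ tt, z i = v (xc i) ∨ z i = w (xc i) := by
    intro i hi
    have h : P' i := by
      rcases hzS i hi with (⟨x, hx, hvx⟩ | ⟨x, hx, hwx⟩)
      · exact ⟨x, hx, Or.inl hvx.symm⟩
      · exact ⟨x, hx, Or.inr hwx.symm⟩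
    simp only [hxc, dif_pos h]
    exact h.choose_spec.2
  set a₁ : ι → ℝ≥0∞ := fun i => if z i = v (xc i) then ENNReal.ofReal (t * wt i) else 0 with ha₁
  set a₂ : ι → ℝ≥0∞ := fun i => if z i = v (xc i) then 0 else ENNReal.ofReal (t * wt i) with ha₂
  have ha₁top : ∀ i, a₁ i ≠ ⊤ := by intro i; simp only [ha₁]; split <;> simp
  have ha₂top : ∀ i, a₂ i ≠ ⊤ := by intro i; simp only [ha₂]; split <;> simp
  have hKc : MeasurableSet Kᶜ := hK.isClosed.measurableSet.compl
  have key : ∀ a : ι → ℝ≥0∞, (∀ i, a i ≠ ⊤) →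
      IsFiniteMeasure (∑ i ∈ tt, a i • Measure.dirac (xc i)) ∧
      (∑ i ∈ tt, a i • Measure.dirac (xc i)) Kᶜ = 0 ∧
      ∀ g : (Fin n → ℝ) → E, Continuous g →
        ∫ x, g x ∂(∑ i ∈ tt, a i • Measure.dirac (xc i)) = ∑ i ∈ tt, (a i).toReal • g (xc i) := by
    intro a hatop
    have hdir : ∀ i, (a i • Measure.dirac (xc i)) Kᶜ = 0 := by
      intro i
      rw [Measure.smul_apply, Measure.dirac_apply' _ hKc,
        Set.indicator_of_notMem (by simp [hxcK i]), smul_zero]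
    have hfin : ∀ i, IsFiniteMeasure (a i • Measure.dirac (xc i)) := by
      intro i
      constructor
      rw [Measure.smul_apply, smul_eq_mul]
      exact ENNReal.mul_lt_top (hatop i).lt_top (by simp)
    refine ⟨?_, ?_, ?_⟩
    · constructor
      rw [Measure.finset_sum_apply]
      exact ENNReal.sum_lt_top.mpr fun i _ => by
        rw [Measure.smul_apply, smul_eq_mul]
        exact ENNReal.mul_lt_top (hatop i).lt_top (by simp)
    · rw [Measure.finset_sum_apply]
      exact Finset.sum_eq_zero fun i _ => hdir i
    · intro g hg
      rw [integral_finset_sum_measure (fun i _ => by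
        haveI := hfin i
        exact aux_integrable hK hg _ (hdir i))]
      refine Finset.sum_congr rfl fun i _ => ?_
      rw [integral_smul_measure, integral_dirac]
  obtain ⟨hfin₁, hsupp₁, hint₁⟩ := key a₁ ha₁top
  obtain ⟨hfin₂, hsupp₂, hint₂⟩ := key a₂ ha₂top
  refine ⟨_, _, hfin₁, hfin₂, hsupp₁, hsupp₂, ?_⟩
  rw [hint₁ v hv, hint₂ w hw, ← Finset.sum_add_distrib]
  have : ∀ i ∈ tt, (a₁ i).toReal • v (xc i) + (a₂ i).toReal • w (xc i) = (t * wt i) • z i := by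
    intro i hi
    have htw : 0 ≤ t * wt i := mul_nonneg ht (hw0 i hi)
    by_cases h : z i = v (xc i)
    · simp only [ha₁, ha₂, if_pos h, ENNReal.toReal_ofReal htw, ENNReal.toReal_zero,
        zero_smul, add_zero, h]
    · have h2 : z i = w (xc i) := (hzi i hi).resolve_left h
      simp only [ha₁, ha₂, if_neg h, ENNReal.toReal_ofReal htw, ENNReal.toReal_zero,
        zero_smul, zero_add, h2]
  rw [Finset.sum_congr rfl this, ← hcm', Finset.smul_sum]
  exact Finset.sum_congr rfl fun i _ => by rw [smul_smul]

theorem stmt_12 (n m : ℕ) (K : Set (Fin n → ℝ)) (hKne : K.Nonempty) (hK : IsCompact K)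
    (f : Fin m → MvPolynomial (Fin n) ℝ) (R₁ R₂ : MvPolynomial (Fin n) ℝ)
    (hR₁ : ∀ x ∈ K, 0 < MvPolynomial.eval x R₁)
    (hR₂ : ∀ x ∈ K, 0 < MvPolynomial.eval x R₂)
    (b : Fin m → ℝ)
    (hfeas : ∃ μ₁ μ₂ : Measure (Fin n → ℝ), IsFiniteMeasure μ₁ ∧ IsFiniteMeasure μ₂ ∧
      μ₁ Kᶜ = 0 ∧ μ₂ Kᶜ = 0 ∧
      ∀ i, ∫ x, MvPolynomial.eval x (f i) ∂μ₁ - ∫ x, MvPolynomial.eval x (f i) ∂μ₂ = b i) :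
    sInf {r : ℝ | ∃ μ₁ μ₂ : Measure (Fin n → ℝ), IsFiniteMeasure μ₁ ∧ IsFiniteMeasure μ₂ ∧
        μ₁ Kᶜ = 0 ∧ μ₂ Kᶜ = 0 ∧
        (∀ i, ∫ x, MvPolynomial.eval x (f i) ∂μ₁ -
          ∫ x, MvPolynomial.eval x (f i) ∂μ₂ = b i) ∧
        r = ∫ x, MvPolynomial.eval x R₁ ∂μ₁ + ∫ x, MvPolynomial.eval x R₂ ∂μ₂} =
    sSup {s : ℝ | ∃ lam : Fin m → ℝ,
        (∀ x ∈ K, 0 ≤ MvPolynomial.eval x R₁ - ∑ i, lam i * MvPolynomial.eval x (f i)) ∧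
        (∀ x ∈ K, 0 ≤ MvPolynomial.eval x R₂ + ∑ i, lam i * MvPolynomial.eval x (f i)) ∧
        s = ∑ i, b i * lam i} := by
  classical
  set P : Set ℝ := {r : ℝ | ∃ μ₁ μ₂ : Measure (Fin n → ℝ), IsFiniteMeasure μ₁ ∧ IsFiniteMeasure μ₂ ∧
        μ₁ Kᶜ = 0 ∧ μ₂ Kᶜ = 0 ∧
        (∀ i, ∫ x, MvPolynomial.eval x (f i) ∂μ₁ -
          ∫ x, MvPolynomial.eval x (f i) ∂μ₂ = b i) ∧
        r = ∫ x, MvPolynomial.eval x R₁ ∂μ₁ + ∫ x, MvPolynomial.eval x R₂ ∂μ₂} with hPdef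
  set D : Set ℝ := {s : ℝ | ∃ lam : Fin m → ℝ,
        (∀ x ∈ K, 0 ≤ MvPolynomial.eval x R₁ - ∑ i, lam i * MvPolynomial.eval x (f i)) ∧
        (∀ x ∈ K, 0 ≤ MvPolynomial.eval x R₂ + ∑ i, lam i * MvPolynomial.eval x (f i)) ∧
        s = ∑ i, b i * lam i} with hDdef
  set F : (Fin n → ℝ) → (Fin m → ℝ) := fun x i => MvPolynomial.eval x (f i) with hFdef
  set v : (Fin n → ℝ) → (Fin m → ℝ) × ℝ := fun x => (F x, MvPolynomial.eval x R₁) with hvdef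
  set w : (Fin n → ℝ) → (Fin m → ℝ) × ℝ := fun x => (-F x, MvPolynomial.eval x R₂) with hwdef
  have hFc : Continuous F := continuous_pi fun i => MvPolynomial.continuous_eval (f i)
  have hv : Continuous v := hFc.prodMk (MvPolynomial.continuous_eval R₁)
  have hw : Continuous w := hFc.neg.prodMk (MvPolynomial.continuous_eval R₂)
  set S : Set ((Fin m → ℝ) × ℝ) := v '' K ∪ w '' K with hSdef
  have hScomp : IsCompact S := (hK.image hv).union (hK.image hw)
  set CS : Set ((Fin m → ℝ) × ℝ) := convexHull ℝ S with hCSdef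
  have hCSconv : Convex ℝ CS := convex_convexHull ℝ S
  have hCScomp : IsCompact CS := aux_isCompact_convexHull hScomp
  have hCScl : IsClosed CS := hCScomp.isClosed
  have hCSne : CS.Nonempty :=
    ⟨v hKne.choose, subset_convexHull ℝ S (Or.inl ⟨_, hKne.choose_spec, rfl⟩)⟩
  have hsnd : ∀ c ∈ CS, 0 < c.2 := by
    intro c hc
    have hlin : IsLinearMap ℝ (fun y : (Fin m → ℝ) × ℝ => y.2) :=
      ⟨fun a b => rfl, fun r a => rfl⟩
    refine convexHull_min ?_ (convex_halfSpace_gt hlin 0) hc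
    rintro y (⟨x, hx, rfl⟩ | ⟨x, hx, rfl⟩)
    · exact hR₁ x hx
    · exact hR₂ x hx
  obtain ⟨c₀, hc₀, hc₀min⟩ := hCScomp.exists_isMinOn hCSne continuous_snd.continuousOn
  have hδ : 0 < c₀.2 := hsnd c₀ hc₀
  have hnorm : ∀ c ∈ CS, c₀.2 ≤ ‖c‖ := fun c hc =>
    le_trans (hc₀min hc) (le_trans (le_abs_self _) (norm_snd_le c))
  set C : Set ((Fin m → ℝ) × ℝ) := {y | ∃ t : ℝ, 0 ≤ t ∧ ∃ c ∈ CS, y = t • c} with hCdef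
  have hCcl : IsClosed C := aux_cone_closed hCScomp hδ hnorm
  have hCsmul : ∀ r : ℝ, 0 ≤ r → ∀ y ∈ C, r • y ∈ C := by
    rintro r hr y ⟨t, ht, c, hc, rfl⟩
    exact ⟨r * t, mul_nonneg hr ht, c, hc, smul_smul r t c⟩
  have hCadd : ∀ y₁ ∈ C, ∀ y₂ ∈ C, y₁ + y₂ ∈ C := by
    rintro y₁ ⟨t₁, ht₁, c₁, hc₁, rfl⟩ y₂ ⟨t₂, ht₂, c₂, hc₂, rfl⟩
    rcases eq_or_lt_of_le (add_nonneg ht₁ ht₂) with h0 | hpos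
    · have h1 : t₁ = 0 := by linarith
      have h2 : t₂ = 0 := by linarith
      exact ⟨0, le_refl 0, c₁, hc₁, by simp [h1, h2]⟩
    · refine ⟨t₁ + t₂, hpos.le, (t₁ / (t₁ + t₂)) • c₁ + (t₂ / (t₁ + t₂)) • c₂,
        hCSconv hc₁ hc₂ (div_nonneg ht₁ hpos.le) (div_nonneg ht₂ hpos.le)
          (by field_simp), ?_⟩
      rw [smul_add, smul_smul, smul_smul, mul_div_cancel₀ _ hpos.ne',
        mul_div_cancel₀ _ hpos.ne']
  have hC0 : (0 : (Fin m → ℝ) × ℝ) ∈ C := ⟨0, le_refl 0, c₀, hc₀, (zero_smul ℝ c₀).symm⟩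
  have hCconv : Convex ℝ C := by
    intro y₁ h₁ y₂ h₂ a b' ha hb hab
    exact hCadd _ (hCsmul a ha y₁ h₁) _ (hCsmul b' hb y₂ h₂)
  -- component extraction
  have hcomp : ∀ (μ : Measure (Fin n → ℝ)), IsFiniteMeasure μ → μ Kᶜ = 0 →
      ∀ g : (Fin n → ℝ) → (Fin m → ℝ) × ℝ, Continuous g →
      (∀ i, (∫ x, g x ∂μ).1 i = ∫ x, (g x).1 i ∂μ) ∧
        ((∫ x, g x ∂μ).2 = ∫ x, (g x).2 ∂μ) := by
    intro μ hμfin hμ g hg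
    haveI := hμfin
    have hint : Integrable g μ := aux_integrable hK hg μ hμ
    constructor
    · intro i
      have h := ((ContinuousLinearMap.proj (R := ℝ) (φ := fun _ : Fin m => ℝ) i).comp
        (ContinuousLinearMap.fst ℝ (Fin m → ℝ) ℝ)).integral_comp_comm hint
      simpa using h.symm
    · have h := (ContinuousLinearMap.snd ℝ (Fin m → ℝ) ℝ).integral_comp_comm hint
      simpa using h.symm
  have hvK : ∀ x ∈ K, v x ∈ CS := fun x hx => subset_convexHull ℝ S (Or.inl ⟨x, hx, rfl⟩)
  have hwK : ∀ x ∈ K, w x ∈ CS := fun x hx => subset_convexHull ℝ S (Or.inr ⟨x, hx, rfl⟩)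
  have hΦmem : ∀ (μ₁ μ₂ : Measure (Fin n → ℝ)), IsFiniteMeasure μ₁ → IsFiniteMeasure μ₂ →
      μ₁ Kᶜ = 0 → μ₂ Kᶜ = 0 → ((∫ x, v x ∂μ₁) + (∫ x, w x ∂μ₂)) ∈ C := by
    intro μ₁ μ₂ h1 h2 h3 h4
    haveI := h1; haveI := h2
    exact hCadd _ (aux_integral_mem hK hCSconv hCScl hCSne hv μ₁ h3 hvK)
      _ (aux_integral_mem hK hCSconv hCScl hCSne hw μ₂ h4 hwK)
  -- P is the C-slice at b
  have hPC : ∀ r : ℝ, r ∈ P ↔ ((b, r) : (Fin m → ℝ) × ℝ) ∈ C := by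
    intro r
    constructor
    · rintro ⟨μ₁, μ₂, h1, h2, h3, h4, h5, rfl⟩
      haveI := h1; haveI := h2
      have hmem := hΦmem μ₁ μ₂ h1 h2 h3 h4
      obtain ⟨hv1, hv2⟩ := hcomp μ₁ h1 h3 v hv
      obtain ⟨hw1, hw2⟩ := hcomp μ₂ h2 h4 w hw
      have heq : ((b, ∫ x, MvPolynomial.eval x R₁ ∂μ₁ + ∫ x, MvPolynomial.eval x R₂ ∂μ₂) :
          (Fin m → ℝ) × ℝ) = (∫ x, v x ∂μ₁) + (∫ x, w x ∂μ₂) := by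
        rw [Prod.ext_iff]
        constructor
        · funext i
          rw [Prod.fst_add, Pi.add_apply, hv1 i, hw1 i]
          simp only [hvdef, hwdef, hFdef, Pi.neg_apply, integral_neg]
          rw [← h5 i]
          ring
        · rw [Prod.snd_add, hv2, hw2]
      rw [heq]
      exact hmem
    · rintro ⟨t, ht, c, hc, heq⟩
      obtain ⟨μ₁, μ₂, h1, h2, h3, h4, hΦ⟩ := aux_realize hKne hK hv hw hc ht
      haveI := h1; haveI := h2
      rw [← heq] at hΦ
      obtain ⟨hv1, hv2⟩ := hcomp μ₁ h1 h3 v hv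
      obtain ⟨hw1, hw2⟩ := hcomp μ₂ h2 h4 w hw
      refine ⟨μ₁, μ₂, h1, h2, h3, h4, ?_, ?_⟩
      · intro i
        have := congrArg (fun y => y.1 i) hΦ
        simp only [Prod.fst_add, Pi.add_apply] at this
        rw [hv1 i, hw1 i] at this
        simp only [hvdef, hwdef, hFdef, Pi.neg_apply, integral_neg] at this
        linarith [this]
      · have := congrArg (fun y => y.2) hΦ
        simp only [Prod.snd_add] at this
        rw [hv2, hw2] at this
        simp only [hvdef, hwdef] at this
        linarith [this]
  have hPslice : P = (fun r : ℝ => ((b, r) : (Fin m → ℝ) × ℝ)) ⁻¹' C := by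
    ext r; exact hPC r
  -- basic facts about P
  have hPne : P.Nonempty := by
    obtain ⟨μ₁, μ₂, h1, h2, h3, h4, h5⟩ := hfeas
    haveI := h1; haveI := h2
    exact ⟨_, ⟨μ₁, μ₂, h1, h2, h3, h4, h5, rfl⟩⟩
  have hPlb : ∀ r ∈ P, (0 : ℝ) ≤ r := by
    intro r hr
    obtain ⟨t, ht, c, hc, heq⟩ := (hPC r).mp hr
    have : r = t * c.2 := by
      have := congrArg Prod.snd heq
      simpa using this
    rw [this]
    exact mul_nonneg ht (hsnd c hc).le
  have hPbdd : BddBelow P := ⟨0, fun r hr => hPlb r hr⟩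
  have hPcl : IsClosed P := by
    rw [hPslice]
    exact hCcl.preimage (continuous_const.prodMk continuous_id)
  have hpP : sInf P ∈ P := hPcl.csInf_mem hPne hPbdd
  have hpC : ((b, sInf P) : (Fin m → ℝ) × ℝ) ∈ C := (hPC _).mp hpP
  -- weak duality
  have hweak : ∀ lam : Fin m → ℝ,
      (∀ x ∈ K, 0 ≤ MvPolynomial.eval x R₁ - ∑ i, lam i * MvPolynomial.eval x (f i)) →
      (∀ x ∈ K, 0 ≤ MvPolynomial.eval x R₂ + ∑ i, lam i * MvPolynomial.eval x (f i)) →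
      ∀ y ∈ C, (∑ i, lam i * y.1 i) ≤ y.2 := by
    intro lam hf1 hf2 y hy
    obtain ⟨t, ht, c, hc, rfl⟩ := hy
    have hlin : IsLinearMap ℝ (fun y : (Fin m → ℝ) × ℝ => (∑ i, lam i * y.1 i) - y.2) := by
      constructor
      · intro a b'
        simp only [Prod.fst_add, Prod.snd_add, Pi.add_apply, mul_add, Finset.sum_add_distrib]
        ring
      · intro r a
        simp only [Prod.smul_fst, Prod.smul_snd, Pi.smul_apply, smul_eq_mul, mul_sub,
          Finset.mul_sum]
        congr 1
        exact Finset.sum_congr rfl fun i _ => by ring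
    have hH : ∀ c' ∈ CS, (∑ i, lam i * c'.1 i) - c'.2 ≤ 0 := by
      intro c' hc'
      refine convexHull_min ?_ (convex_halfSpace_le hlin 0) hc'
      rintro y (⟨x, hx, rfl⟩ | ⟨x, hx, rfl⟩)
      · have := hf1 x hx
        simp only [hvdef, hFdef, Set.mem_setOf_eq]
        linarith
      · have := hf2 x hx
        simp only [hwdef, hFdef, Set.mem_setOf_eq, Pi.neg_apply, mul_neg,
          Finset.sum_neg_distrib]
        linarith
    have hc' := hH c hc
    simp only [Prod.smul_fst, Prod.smul_snd, Pi.smul_apply, smul_eq_mul]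
    calc (∑ i, lam i * (t * c.1 i)) = t * ∑ i, lam i * c.1 i := by
          rw [Finset.mul_sum]; exact Finset.sum_congr rfl fun i _ => by ring
      _ ≤ t * c.2 := mul_le_mul_of_nonneg_left (by linarith) ht
  have hub : ∀ s ∈ D, s ≤ sInf P := by
    rintro s ⟨lam, hf1, hf2, rfl⟩
    have h := hweak lam hf1 hf2 _ hpC
    calc (∑ i, b i * lam i) = ∑ i, lam i * b i := by
          exact Finset.sum_congr rfl fun i _ => by ring
      _ ≤ sInf P := h
  -- strong duality via separation
  have hsep : ∀ ε : ℝ, 0 < ε → ∃ s ∈ D, sInf P - ε < s := by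
    intro ε hε
    have hnot : ((b, sInf P - ε) : (Fin m → ℝ) × ℝ) ∉ C := by
      intro hmem
      have h1 : sInf P - ε ∈ P := (hPC _).mpr hmem
      have h2 := csInf_le hPbdd h1
      linarith
    obtain ⟨φ, u, hltu, hu⟩ := geometric_hahn_banach_closed_point hCconv hCcl hnot
    have hu0 : 0 < u := by
      have := hltu 0 hC0
      simpa using this
    have hφle : ∀ y ∈ C, φ y ≤ 0 := by
      intro y hy
      by_contra hpos
      push_neg at hpos
      have h2 : ((u + 1) / φ y) • y ∈ C := hCsmul _ (div_nonneg (by linarith) hpos.le) y hy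
      have h3 := hltu _ h2
      rw [_root_.map_smul, smul_eq_mul, div_mul_cancel₀ _ hpos.ne'] at h3
      linarith
    set lam0 : ℝ := φ (0, 1) with hlam0
    set lr : Fin m → ℝ := fun i => φ (Pi.single i 1, 0) with hlrdef
    have hrep : ∀ y : (Fin m → ℝ) × ℝ, φ y = (∑ i, y.1 i * lr i) + y.2 * lam0 := by
      intro y
      have hy : y = (∑ i, y.1 i • (((Pi.single i 1 : Fin m → ℝ), (0 : ℝ)) :
          (Fin m → ℝ) × ℝ)) + y.2 • (((0 : Fin m → ℝ), (1 : ℝ)) : (Fin m → ℝ) × ℝ) := by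
        rw [Prod.ext_iff]
        constructor
        · simp only [Prod.fst_add, Prod.fst_sum, Prod.smul_fst, smul_zero, add_zero]
          funext j
          simp [Pi.single_apply, Finset.sum_apply, mul_ite, Finset.sum_ite_eq]
        · simp [Prod.snd_sum]
      calc φ y = φ ((∑ i, y.1 i • (((Pi.single i 1 : Fin m → ℝ), (0 : ℝ)) :
            (Fin m → ℝ) × ℝ)) + y.2 • (((0 : Fin m → ℝ), (1 : ℝ)) : (Fin m → ℝ) × ℝ)) := by
            rw [← hy]
        _ = (∑ i, y.1 i * lr i) + y.2 * lam0 := by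
            rw [map_add, map_sum, _root_.map_smul, smul_eq_mul]
            congr 1
            exact Finset.sum_congr rfl fun i _ => by rw [_root_.map_smul, smul_eq_mul]
    have h1 : 0 < (∑ i, b i * lr i) + (sInf P - ε) * lam0 := by
      have := hrep (b, sInf P - ε)
      simp only at this
      rw [this] at hu
      linarith
    have h2 : (∑ i, b i * lr i) + (sInf P) * lam0 ≤ 0 := by
      have h3 := hφle _ hpC
      rw [hrep] at h3
      simpa using h3
    have hlam0neg : lam0 < 0 := by nlinarith
    have hpos : (0 : ℝ) < -lam0 := by linarith
    set lam : Fin m → ℝ := fun i => lr i / (-lam0) with hlamdef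
    have hsum : ∀ c' : Fin m → ℝ, (∑ i, lam i * c' i) = (∑ i, c' i * lr i) / (-lam0) := by
      intro c'
      rw [Finset.sum_div]
      exact Finset.sum_congr rfl fun i _ => by
        simp only [hlamdef]
        ring
    refine ⟨∑ i, b i * lam i, ⟨lam, ?_, ?_, rfl⟩, ?_⟩
    · intro x hx
      have hvC : v x ∈ C := ⟨1, zero_le_one, v x, hvK x hx, (one_smul ℝ (v x)).symm⟩
      have h3 := hφle _ hvC
      rw [hrep] at h3
      simp only [hvdef, hFdef] at h3
      have h4 : (∑ i, lam i * MvPolynomial.eval x (f i)) =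
          (∑ i, MvPolynomial.eval x (f i) * lr i) / (-lam0) := hsum _
      rw [sub_nonneg, h4, div_le_iff₀ hpos]
      nlinarith
    · intro x hx
      have hwC : w x ∈ C := ⟨1, zero_le_one, w x, hwK x hx, (one_smul ℝ (w x)).symm⟩
      have h3 := hφle _ hwC
      rw [hrep] at h3
      simp only [hwdef, hFdef, Pi.neg_apply, neg_mul, Finset.sum_neg_distrib] at h3
      have h4 : (∑ i, lam i * MvPolynomial.eval x (f i)) =
          (∑ i, MvPolynomial.eval x (f i) * lr i) / (-lam0) := hsum _
      have h5 : (-(MvPolynomial.eval x R₂)) * (-lam0) ≤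
          ∑ i, MvPolynomial.eval x (f i) * lr i := by nlinarith
      have h6 := (le_div_iff₀ hpos).mpr h5
      rw [h4]
      linarith
    · have h4 : (∑ i, b i * lam i) = (∑ i, b i * lr i) / (-lam0) := by
        rw [Finset.sum_div]
        exact Finset.sum_congr rfl fun i _ => by
          simp only [hlamdef]
          ring
      rw [h4, lt_div_iff₀ hpos]
      nlinarith
  have hDne : D.Nonempty := by
    obtain ⟨s, hs, _⟩ := hsep 1 one_pos
    exact ⟨s, hs⟩
  apply le_antisymm
  · by_contra h
    push_neg at h
    obtain ⟨s, hs, hgt⟩ := hsep (sInf P - sSup D) (by linarith)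
    have := le_csSup ⟨sInf P, hub⟩ hs
    linarith
  · exact csSup_le hDne hub
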